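/- Every Gromov-hyperbolic geodesic metric space is strongly shortcut: if X is δ-hyperbolic, there exist K > 1, n ∈ ℕ, and M > 0 such that no K-bilipschitz copy of the rescaled n-cycle vertex set (C_n⁰, λ d_{C_n}) with λ ≥ M embeds in X. -/
import Mathlib


open Set

/-- `f` is a geodesic from `x` to `y`, parametrized by arc length on
`[0, dist x y]`. -/
def IsGeodesicFrom {X : Type*} [MetricSpace X] (f : ℝ → X) (x y : X) : Prop :=
  f 0 = x ∧ f (dist x y) = y ∧
    ∀ s t : ℝ, s ∈ Icc 0 (dist x y) → t ∈ Icc 0 (dist x y) → dist (f s) (f t) = |s - t|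

/-- A geodesic metric space: any two points are joined by a geodesic. -/
def GeodesicSpace (X : Type*) [MetricSpace X] : Prop :=
  ∀ x y : X, ∃ f : ℝ → X, IsGeodesicFrom f x y

/-- `X` is `δ`-hyperbolic: every geodesic triangle is `δ`-thin, i.e. each side is
contained in the `δ`-neighbourhood of the union of the other two sides. -/
def GromovHyperbolic (X : Type*) [MetricSpace X] (δ : ℝ) : Prop :=
  ∀ x y z : X, ∀ f g h : ℝ → X,
    IsGeodesicFrom f x y → IsGeodesicFrom g y z → IsGeodesicFrom h x z →
    ∀ s ∈ Icc (0 : ℝ) (dist x y), ∃ u : X,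
      u ∈ g '' Icc (0 : ℝ) (dist y z) ∪ h '' Icc (0 : ℝ) (dist x z) ∧ dist (f s) u ≤ δ

/-- The combinatorial metric of the cycle of length `n` between positions `i` and `j`:
`min(|i − j|, n − |i − j|)`. -/
def cycDist (n i j : ℕ) : ℕ :=
  min (max i j - min i j) (n - (max i j - min i j))


lemma thin_mid {X : Type*} [MetricSpace X] {δ : ℝ}
    (hgeo : GeodesicSpace X) (hhyp : GromovHyperbolic X δ)
    (a b c : X) (γ : ℝ → X) (hγ : IsGeodesicFrom γ a c)
    {s : ℝ} (hs : s ∈ Icc 0 (dist a c)) :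
    dist (γ s) b ≤ max (dist a b - s) (dist c b - (dist a c - s)) + 2 * δ := by
  obtain ⟨g, hg⟩ := hgeo c b
  obtain ⟨h, hh⟩ := hgeo a b
  obtain ⟨u, hu, hud⟩ := hhyp a c b γ g h hγ hg hh s hs
  rcases hu with ⟨t, ht, rfl⟩ | ⟨t, ht, rfl⟩
  · -- u on geodesic from c to b
    have h1 : dist c (g t) = t := by
      rw [← hg.1, hg.2.2 0 t ⟨le_refl 0, dist_nonneg⟩ ht, zero_sub, abs_neg,
        abs_of_nonneg ht.1]
    have h2 : dist (g t) b = dist c b - t := by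
      conv_lhs => rw [← hg.2.1]
      rw [ hg.2.2 t (dist c b) ht ⟨dist_nonneg, le_refl _⟩,
        abs_of_nonpos (by linarith [ht.2])]
      ring
    have h3 : dist c (γ s) = dist a c - s := by
      conv_lhs => rw [← hγ.2.1]
      rw [ hγ.2.2 (dist a c) s ⟨dist_nonneg, le_refl _⟩ hs,
        abs_of_nonneg (by linarith [hs.2])]
    have h4 : dist c (γ s) ≤ dist c (g t) + dist (g t) (γ s) := dist_triangle _ _ _
    rw [dist_comm (g t) (γ s)] at h4
    have h5 : dist (γ s) b ≤ dist (γ s) (g t) + dist (g t) b := dist_triangle _ _ _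
    have h6 := le_max_right (dist a b - s) (dist c b - (dist a c - s))
    linarith
  · -- u on geodesic from a to b
    have h1 : dist a (h t) = t := by
      rw [← hh.1, hh.2.2 0 t ⟨le_refl 0, dist_nonneg⟩ ht, zero_sub, abs_neg,
        abs_of_nonneg ht.1]
    have h2 : dist (h t) b = dist a b - t := by
      conv_lhs => rw [← hh.2.1]
      rw [ hh.2.2 t (dist a b) ht ⟨dist_nonneg, le_refl _⟩,
        abs_of_nonpos (by linarith [ht.2])]
      ring
    have h3 : dist a (γ s) = s := by
      rw [← hγ.1, hγ.2.2 0 s ⟨le_refl 0, dist_nonneg⟩ hs, zero_sub, abs_neg,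
        abs_of_nonneg hs.1]
    have h4 : dist a (γ s) ≤ dist a (h t) + dist (h t) (γ s) := dist_triangle _ _ _
    rw [dist_comm (h t) (γ s)] at h4
    have h5 : dist (γ s) b ≤ dist (γ s) (h t) + dist (h t) b := dist_triangle _ _ _
    have h6 := le_max_left (dist a b - s) (dist c b - (dist a c - s))
    linarith

/-- Every Gromov-hyperbolic geodesic metric space is strongly shortcut: if `X` is
`δ`-hyperbolic there exist `K > 1`, `n ≥ 3` and `M > 0` such that no `K`-bilipschitz
copy of the rescaled `n`-cycle vertex set `(C_n⁰, λ d_{C_n})` with `λ ≥ M` embeds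
in `X`. -/
theorem hyperbolic_implies_stronglyShortcut (X : Type*) [MetricSpace X] (δ : ℝ)
    (hδ : 0 ≤ δ) (hgeo : GeodesicSpace X) (hhyp : GromovHyperbolic X δ) :
    ∃ K : ℝ, 1 < K ∧ ∃ n : ℕ, 3 ≤ n ∧ ∃ M : ℝ, 0 < M ∧ ∀ l : ℝ, M ≤ l →
      ¬ ∃ f : Fin n → X, ∀ i j : Fin n,
        l * (cycDist n i.1 j.1 : ℝ) / K ≤ dist (f i) (f j) ∧
        dist (f i) (f j) ≤ K * (l * (cycDist n i.1 j.1 : ℝ)) := by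
  refine ⟨6/5, by norm_num, 4, by norm_num, 5*(δ+1), by positivity, ?_⟩
  rintro l hl ⟨f, hf⟩
  have hlpos : 0 < l := by linarith
  obtain ⟨γ, hγ⟩ := hgeo (f 0) (f 2)
  have hD0 : (0:ℝ) ≤ dist (f 0) (f 2) := dist_nonneg
  have hs : dist (f 0) (f 2) / 2 ∈ Icc 0 (dist (f 0) (f 2)) := ⟨by linarith, by linarith⟩
  have hb := thin_mid hgeo hhyp (f 0) (f 1) (f 2) γ hγ hs
  have hd := thin_mid hgeo hhyp (f 0) (f 3) (f 2) γ hγ hs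
  have e01 := hf 0 1
  have e21 := hf 2 1
  have e03 := hf 0 3
  have e23 := hf 2 3
  have e13 := hf 1 3
  have e02 := hf 0 2
  rw [show cycDist 4 (0:Fin 4).1 (1:Fin 4).1 = 1 from rfl] at e01
  rw [show cycDist 4 (2:Fin 4).1 (1:Fin 4).1 = 1 from rfl] at e21
  rw [show cycDist 4 (0:Fin 4).1 (3:Fin 4).1 = 1 from rfl] at e03
  rw [show cycDist 4 (2:Fin 4).1 (3:Fin 4).1 = 1 from rfl] at e23
  rw [show cycDist 4 (1:Fin 4).1 (3:Fin 4).1 = 2 from rfl] at e13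
  rw [show cycDist 4 (0:Fin 4).1 (2:Fin 4).1 = 2 from rfl] at e02
  norm_num at e01 e21 e03 e23 e13 e02
  have hb' : dist (γ (dist (f 0) (f 2) / 2)) (f 1) ≤
      6/5*l - dist (f 0) (f 2)/2 + 2*δ := by
    refine le_trans hb ?_
    have : max (dist (f 0) (f 1) - dist (f 0) (f 2)/2)
        (dist (f 2) (f 1) - (dist (f 0) (f 2) - dist (f 0) (f 2)/2)) ≤
        6/5*l - dist (f 0) (f 2)/2 := by
      apply max_le <;> [linarith [e01.2]; linarith [e21.2]]
    linarith
  have hd' : dist (γ (dist (f 0) (f 2) / 2)) (f 3) ≤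
      6/5*l - dist (f 0) (f 2)/2 + 2*δ := by
    refine le_trans hd ?_
    have : max (dist (f 0) (f 3) - dist (f 0) (f 2)/2)
        (dist (f 2) (f 3) - (dist (f 0) (f 2) - dist (f 0) (f 2)/2)) ≤
        6/5*l - dist (f 0) (f 2)/2 := by
      apply max_le <;> [linarith [e03.2]; linarith [e23.2]]
    linarith
  have htri : dist (f 1) (f 3) ≤ dist (γ (dist (f 0) (f 2) / 2)) (f 1) +
      dist (γ (dist (f 0) (f 2) / 2)) (f 3) := by
    rw [dist_comm (γ _) (f 1)]
    exact dist_triangle _ _ _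
  linarith [e13.1, e02.1]
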